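/- arXiv:math/0601507 — 2 statements merged into one kernel-verified Lean document; each statement's English description precedes it below -/
import Mathlib

section
/- Let F be a field, G a group, and B a G-regular F-algebra (B a nonzero integral domain with G acting by F-algebra automorphisms, (Frac B)^G = B^G, and every nonzero b ∈ B whose F-span is G-stable is a unit of B); write E = B^G for its fixed field. Let V be a finite-dimensional F-vector space equipped with an F-linear action of G, and let G act on B ⊗_F V diagonally (g·(b⊗v) = (g·b)⊗(g·v)). Then D_B(V) := (B ⊗_F V)^G is an E-vector space of dimension at most dim_F V. -/
open TensorProduct

universe u

/-- The subring of elements of `B` fixed by every element of `G`,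
where `G` acts on the `F`-algebra `B` through `F`-algebra automorphisms. -/
def fixedSubring {F B G : Type*} [Field F] [CommRing B] [Algebra F B] [Group G]
    (ρ : G →* (B ≃ₐ[F] B)) : Subring B where
  carrier := {b : B | ∀ g : G, ρ g b = b}
  mul_mem' := fun ha hb g => by rw [map_mul, ha g, hb g]
  one_mem' := fun g => map_one (ρ g)
  add_mem' := fun ha hb g => by rw [map_add, ha g, hb g]
  zero_mem' := fun g => map_zero (ρ g)
  neg_mem' := fun ha g => by rw [map_neg, ha g]

/-- The diagonal action of `g : G` on `B ⊗[F] V`, namely `g • (b ⊗ v) = (g • b) ⊗ (g • v)`. -/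
noncomputable def diagAction {F B G V : Type*} [Field F] [CommRing B] [Algebra F B] [Group G]
    [AddCommGroup V] [Module F V]
    (ρ : G →* (B ≃ₐ[F] B)) (σ : Representation F G V) (g : G) :
    B ⊗[F] V →ₗ[F] B ⊗[F] V :=
  TensorProduct.map ((ρ g).toLinearMap) (σ g)

/-- The diagonal action of `g` is semilinear over the action of `g` on `B`. -/
theorem diagAction_smul {F B G V : Type*} [Field F] [CommRing B] [Algebra F B] [Group G]
    [AddCommGroup V] [Module F V]
    (ρ : G →* (B ≃ₐ[F] B)) (σ : Representation F G V) (g : G) (b : B) (x : B ⊗[F] V) :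
    diagAction ρ σ g (b • x) = (ρ g b) • diagAction ρ σ g x := by
  induction x using TensorProduct.induction_on with
  | zero => simp
  | tmul b' v =>
      simp [diagAction, TensorProduct.smul_tmul', smul_eq_mul, map_mul]
  | add x y hx hy => simp [smul_add, hx, hy]

/-- The period space `D_B(V) = (B ⊗_F V)^G`, as a module over the fixed field
`E = B^G`.  Here `B ⊗[F] V` is a `B`-module through the left factor, and `E` acts
through the inclusion `E ⊆ B`. -/
noncomputable def periodSpace {F B G V : Type*} [Field F] [CommRing B] [Algebra F B] [Group G]
    [AddCommGroup V] [Module F V]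
    (ρ : G →* (B ≃ₐ[F] B)) (σ : Representation F G V) :
    Submodule (fixedSubring ρ) (B ⊗[F] V) where
  carrier := {x : B ⊗[F] V | ∀ g : G, diagAction ρ σ g x = x}
  add_mem' := fun hx hy g => by rw [map_add, hx g, hy g]
  zero_mem' := fun g => map_zero _
  smul_mem' := fun c x hx g => by
    have : (c : B) • x ∈ {x : B ⊗[F] V | ∀ g : G, diagAction ρ σ g x = x} := by
      intro g'
      rw [diagAction_smul, hx g', c.2 g']
    exact this g

set_option synthInstance.maxHeartbeats 1000000 in
set_option maxHeartbeats 1000000 in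
/-- Key lemma: a family of `G`-fixed elements that is linearly independent over
`E = B^G` is linearly independent over `B`. -/
theorem linearIndependent_B_of_linearIndependent_E
    {F B G V : Type u} [Field F] [CommRing B] [IsDomain B] [Algebra F B] [Group G]
    [AddCommGroup V] [Module F V]
    (ρ : G →* (B ≃ₐ[F] B)) (σ : Representation F G V)
    (hfrac : ∀ a b : B, b ≠ 0 → (∀ g : G, ρ g a * b = ρ g b * a) →
      ∃ c : B, (∀ g : G, ρ g c = c) ∧ a = c * b)
    {ι : Type u} (d : ι → periodSpace ρ σ)
    (hli : LinearIndependent (fixedSubring ρ) d) :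
    LinearIndependent B (fun i => (d i : B ⊗[F] V)) := by
  classical
  rw [linearIndependent_iff']
  suffices main : ∀ n (t : Finset ι), t.card ≤ n → ∀ f : ι → B,
      (∑ i ∈ t, f i • (d i : B ⊗[F] V)) = 0 → ∀ i ∈ t, f i = 0 by
    intro s f hs i hi
    exact main s.card s le_rfl f hs i hi
  intro n
  induction n with
  | zero =>
      intro t ht f _ i hi
      simp [Finset.card_eq_zero.mp (Nat.le_zero.mp ht)] at hi
  | succ n ih =>
      intro t ht f hsum i₀ hi₀
      by_contra hf0
      -- Step 1: for every g and i ∈ t, ρ g (f i₀) * f i = f i₀ * ρ g (f i)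
      have hg : ∀ (g : G), ∀ i ∈ t, ρ g (f i₀) * f i = f i₀ * ρ g (f i) := by
        intro g
        have h2 : (∑ i ∈ t, (ρ g (f i)) • (d i : B ⊗[F] V)) = 0 := by
          have h := congrArg (diagAction ρ σ g) hsum
          rw [map_sum, map_zero] at h
          calc (∑ i ∈ t, (ρ g (f i)) • (d i : B ⊗[F] V))
              = ∑ i ∈ t, diagAction ρ σ g (f i • (d i : B ⊗[F] V)) := by
                refine Finset.sum_congr rfl fun i _ => ?_
                rw [diagAction_smul, (d i).2 g]
            _ = 0 := h
        have h3 : (∑ i ∈ t.erase i₀,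
            (ρ g (f i₀) * f i - f i₀ * ρ g (f i)) • (d i : B ⊗[F] V)) = 0 := by
          rw [Finset.sum_erase _ (by rw [mul_comm (f i₀)]; simp)]
          have : (∑ i ∈ t,
              (ρ g (f i₀) * f i - f i₀ * ρ g (f i)) • (d i : B ⊗[F] V)) =
              ρ g (f i₀) • (∑ i ∈ t, f i • (d i : B ⊗[F] V)) -
              f i₀ • (∑ i ∈ t, (ρ g (f i)) • (d i : B ⊗[F] V)) := by
            rw [Finset.smul_sum, Finset.smul_sum, ← Finset.sum_sub_distrib]
            refine Finset.sum_congr rfl fun i _ => ?_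
            rw [smul_smul, smul_smul]; exact sub_smul (R := B) (M := B ⊗[F] V) _ _ _
          rw [this, hsum, h2, smul_zero, smul_zero, sub_zero]
        have h4 := ih (t.erase i₀)
          (by rw [Finset.card_erase_of_mem hi₀]; omega) _ h3
        intro i hi
        by_cases hii : i = i₀
        · subst hii; ring
        · have := h4 i (Finset.mem_erase.mpr ⟨hii, hi⟩)
          exact sub_eq_zero.mp this
      -- Step 2: each f i is an E-multiple of f i₀
      have hcex : ∀ i ∈ t, ∃ c : B, (∀ g : G, ρ g c = c) ∧ f i = c * f i₀ := by
        intro i hi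
        exact hfrac (f i) (f i₀) hf0 (fun g => by
          rw [mul_comm (ρ g (f i)) (f i₀), mul_comm (ρ g (f i₀)) (f i), ← hg g i hi]
          ring)
      choose c hc1 hc2 using hcex
      set e : ι → fixedSubring ρ := fun i =>
        if h : i ∈ t then ⟨c i h, hc1 i h⟩ else 0 with he
      -- Step 3: E-linear relation among the d i
      have hrel : (∑ i ∈ t, e i • d i) = 0 := by
        have hcast : ((∑ i ∈ t, e i • d i : periodSpace ρ σ) : B ⊗[F] V) =
            ∑ i ∈ t, ((e i : B) • (d i : B ⊗[F] V)) := by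
          push_cast
          rfl
        have hzero : f i₀ • (∑ i ∈ t, ((e i : B) • (d i : B ⊗[F] V))) = 0 := by
          rw [Finset.smul_sum]
          calc (∑ i ∈ t, f i₀ • ((e i : B) • (d i : B ⊗[F] V)))
              = ∑ i ∈ t, f i • (d i : B ⊗[F] V) := by
                refine Finset.sum_congr rfl fun i hi => ?_
                rw [smul_smul, he]
                simp only [dif_pos hi]
                rw [mul_comm, ← hc2 i hi]
            _ = 0 := hsum
        have : (∑ i ∈ t, ((e i : B) • (d i : B ⊗[F] V))) = 0 :=
          (smul_eq_zero.mp hzero).resolve_left hf0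
        apply Subtype.ext
        rw [hcast, this]
        rfl
      have := (linearIndependent_iff' (R := fixedSubring ρ) (M := periodSpace ρ σ)).mp hli t e hrel i₀ hi₀
      have hc0 : c i₀ hi₀ = 0 := by
        have : e i₀ = 0 := this
        rw [he] at this
        simpa [dif_pos hi₀] using congrArg (Subtype.val) this
      exact hf0 (by rw [hc2 i₀ hi₀, hc0, zero_mul])


/-- Let `B` be a `G`-regular `F`-algebra (an integral domain on which `G` acts by `F`-algebra
automorphisms, such that `(Frac B)^G = B^G` and every nonzero `b ∈ B` whose `F`-span is
`G`-stable is a unit), with fixed field `E = B^G`.  For any finite-dimensional `F`-linear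
representation `V` of `G`, the period space `D_B(V) = (B ⊗_F V)^G` (for the diagonal
`G`-action) is an `E`-vector space of dimension at most `dim_F V`. -/
theorem rank_periodSpace_le
    {F B G V : Type u} [Field F] [CommRing B] [IsDomain B] [Algebra F B] [Group G]
    [AddCommGroup V] [Module F V] [FiniteDimensional F V]
    (ρ : G →* (B ≃ₐ[F] B)) (σ : Representation F G V)
    (hfrac : ∀ a b : B, b ≠ 0 → (∀ g : G, ρ g a * b = ρ g b * a) →
      ∃ c : B, (∀ g : G, ρ g c = c) ∧ a = c * b)
    (hreg : ∀ b : B, b ≠ 0 → (∀ g : G, ∃ c : F, ρ g b = c • b) → IsUnit b) :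
    Module.rank (fixedSubring ρ) (periodSpace ρ σ) ≤ Module.rank F V := by
  have key : Module.rank (fixedSubring ρ) (periodSpace ρ σ) ≤
      Module.rank B (B ⊗[F] V) := by
    rw [Module.rank]
    refine ciSup_le' fun ⟨s, hs⟩ => ?_
    have hBli := linearIndependent_B_of_linearIndependent_E ρ σ hfrac
      (fun x : s => (x : periodSpace ρ σ)) hs
    exact hBli.cardinal_le_rank
  calc Module.rank (fixedSubring ρ) (periodSpace ρ σ)
      ≤ Module.rank B (B ⊗[F] V) := key
    _ = Module.rank F V := by rw [Module.rank_baseChange, Cardinal.lift_id]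
end

section
/- Let F be a field, G a group, and B a G-regular F-algebra (B a nonzero integral domain with G acting by F-algebra automorphisms, (Frac B)^G = B^G, and every nonzero b ∈ B whose F-span is G-stable is a unit of B); write E = B^G. Let V be a finite-dimensional F-vector space with an F-linear G-action, and let G act diagonally on B ⊗_F V. Then the natural B-linear map B ⊗_E (B ⊗_F V)^G → B ⊗_F V, sending b ⊗ x to b·x, is injective. -/
open TensorProduct

universe u

/-- The natural map `B ⊗_E D_B(V) → B ⊗_F V`, sending `b ⊗ x` to `b • x`
(where `B ⊗[F] V` is a `B`-module through the left factor). -/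
noncomputable def multMap {F B G V : Type u} [Field F] [CommRing B] [Algebra F B] [Group G]
    [AddCommGroup V] [Module F V]
    (ρ : G →* (B ≃ₐ[F] B)) (σ : Representation F G V) :
    B ⊗[fixedSubring ρ] (periodSpace ρ σ) →ₗ[fixedSubring ρ] B ⊗[F] V :=
  TensorProduct.lift <| LinearMap.mk₂ (fixedSubring ρ)
    (fun b (x : periodSpace ρ σ) => b • (x : B ⊗[F] V))
    (fun b₁ b₂ x => add_smul b₁ b₂ (x : B ⊗[F] V))
    (fun c b x => smul_assoc c b (x : B ⊗[F] V))
    (fun b x y => by simp [smul_add])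
    (fun c b x => by
      change b • ((c : B) • (x : B ⊗[F] V)) = (c : B) • (b • (x : B ⊗[F] V))
      rw [smul_comm])


set_option synthInstance.maxHeartbeats 1000000
set_option maxHeartbeats 3000000

section Aux

variable {F B G V : Type u} [Field F] [CommRing B] [IsDomain B] [Algebra F B] [Group G]
    [AddCommGroup V] [Module F V]
    (ρ : G →* (B ≃ₐ[F] B)) (σ : Representation F G V)

/-- Fixed elements of `B`, E-linearly independent in the period space, remain `B`-linearly
independent in `B ⊗[F] V`. -/
theorem key_linearIndependent
    (hfrac : ∀ a b : B, b ≠ 0 → (∀ g : G, ρ g a * b = ρ g b * a) →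
      ∃ c : B, (∀ g : G, ρ g c = c) ∧ a = c * b)
    {ι : Type*} (v : ι → periodSpace ρ σ)
    (hv : LinearIndependent (fixedSubring ρ) v) :
    LinearIndependent B (fun i => ((v i : B ⊗[F] V))) := by
  classical
  haveI : NoZeroSMulDivisors B (B ⊗[F] V) :=
    ⟨fun h => (((Module.Basis.ofVectorSpace F V).baseChange B).smul_eq_zero).mp h⟩
  rw [linearIndependent_iff]
  suffices H : ∀ n (l : ι →₀ B), l.support.card = n →
      Finsupp.linearCombination B (fun i => ((v i : B ⊗[F] V))) l = 0 → l = 0 by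
    exact fun l hl => H _ l rfl hl
  intro n
  induction n using Nat.strong_induction_on with
  | _ n ih =>
  intro l hcard hl
  rcases eq_or_ne l 0 with h | h
  · exact h
  exfalso
  obtain ⟨i₀, hi₀⟩ := Finsupp.support_nonempty_iff.mpr h
  have hl0 : l i₀ ≠ 0 := Finsupp.mem_support_iff.mp hi₀
  rw [Finsupp.linearCombination_apply, Finsupp.sum] at hl
  have hg : ∀ g : G, ∑ i ∈ l.support, ρ g (l i) • ((v i : B ⊗[F] V)) = 0 := by
    intro g
    have h2 := congrArg (diagAction ρ σ g) hl
    rw [map_sum, map_zero] at h2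
    rw [← h2]
    refine Finset.sum_congr rfl fun i _ => ?_
    rw [diagAction_smul, (v i).2 g]
  have hcomm : ∀ (g : G) (i : ι), ρ g (l i₀) * l i = l i₀ * ρ g (l i) := by
    intro g i
    by_cases hi : i ∈ l.support
    · set lg : ι →₀ B := ρ g (l i₀) • l - l i₀ • l.mapRange (ρ g) (map_zero _) with hlg
      have hlgval : ∀ j, lg j = ρ g (l i₀) * l j - l i₀ * ρ g (l j) := by
        intro j
        simp [hlg, Finsupp.sub_apply, Finsupp.smul_apply, Finsupp.mapRange_apply,
          smul_eq_mul]
      have hsub : lg.support ⊆ l.support.erase i₀ := by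
        intro j hj
        have hj' : lg j ≠ 0 := Finsupp.mem_support_iff.mp hj
        rw [Finset.mem_erase]
        constructor
        · rintro rfl
          exact hj' (by rw [hlgval, mul_comm, sub_self])
        · by_contra hjs
          have : l j = 0 := Finsupp.notMem_support_iff.mp hjs
          exact hj' (by simp [hlgval, this])
      have hlgtot : Finsupp.linearCombination B (fun i => ((v i : B ⊗[F] V))) lg = 0 := by
        have hss := Finsupp.sum_of_support_subset lg (hsub.trans (Finset.erase_subset _ _))
          (fun j b => b • ((v j : B ⊗[F] V))) (fun j _ => zero_smul B _)
        rw [Finsupp.linearCombination_apply, hss]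
        have : ∑ j ∈ l.support, lg j • ((v j : B ⊗[F] V)) =
            ρ g (l i₀) • ∑ j ∈ l.support, l j • ((v j : B ⊗[F] V)) -
              l i₀ • ∑ j ∈ l.support, ρ g (l j) • ((v j : B ⊗[F] V)) := by
          rw [Finset.smul_sum, Finset.smul_sum, ← Finset.sum_sub_distrib]
          refine Finset.sum_congr rfl fun j _ => ?_
          rw [hlgval, smul_smul, smul_smul]
          exact sub_smul (R := B) (M := B ⊗[F] V) _ _ _
        rw [this, hl, hg g, smul_zero, smul_zero, sub_self]
      have hcardlt : lg.support.card < n := by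
        calc lg.support.card ≤ (l.support.erase i₀).card := Finset.card_le_card hsub
          _ < l.support.card := Finset.card_erase_lt_of_mem hi₀
          _ = n := hcard
      have := ih _ hcardlt lg rfl hlgtot
      have := congrArg (fun f : ι →₀ B => f i) this
      simp only [Finsupp.coe_zero, Pi.zero_apply] at this
      rw [hlgval] at this
      exact sub_eq_zero.mp this
    · have : l i = 0 := Finsupp.notMem_support_iff.mp hi
      simp [this]
  have hcs : ∀ i, ∃ c : B, (∀ g, ρ g c = c) ∧ l i = c * l i₀ := by
    intro i
    refine hfrac (l i) (l i₀) hl0 fun g => ?_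
    rw [mul_comm (ρ g (l i))]
    exact (hcomm g i).symm
  choose c hcfix hcmul using hcs
  set e : ι → fixedSubring ρ := fun i => ⟨c i, hcfix i⟩ with he
  set y : periodSpace ρ σ := ∑ i ∈ l.support, e i • v i with hy
  have hycoe : (y : B ⊗[F] V) = ∑ i ∈ l.support, (c i) • ((v i : B ⊗[F] V)) := by
    rw [hy]
    push_cast
    rfl
  have hsmul : l i₀ • (y : B ⊗[F] V) = 0 := by
    rw [hycoe, Finset.smul_sum, ← hl]
    refine Finset.sum_congr rfl fun i _ => ?_
    rw [smul_smul, mul_comm, ← hcmul]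
  have hyzero : y = 0 := by
    rcases smul_eq_zero.mp hsmul with h' | h'
    · exact absurd h' hl0
    · exact Subtype.ext h'
  have hsum0 : ∑ i ∈ l.support, e i • v i = 0 := by rw [← hy, hyzero]
  have := (linearIndependent_iff' (R := fixedSubring ρ) (M := periodSpace ρ σ) (v := v)).mp hv l.support e hsum0 i₀ hi₀
  have hc0 : c i₀ = 0 := congrArg Subtype.val this
  exact hl0 (by rw [hcmul i₀, hc0, zero_mul])

end Aux

/-- Let `B` be a `G`-regular `F`-algebra (an integral domain on which `G` acts by `F`-algebra
automorphisms, such that `(Frac B)^G = B^G` and every nonzero `b ∈ B` whose `F`-span is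
`G`-stable is a unit), with fixed field `E = B^G`.  For any finite-dimensional `F`-linear
representation `V` of `G`, the natural map
`B ⊗_E (B ⊗_F V)^G → B ⊗_F V`, `b ⊗ x ↦ b • x`, is injective. -/
theorem multMap_injective
    {F B G V : Type u} [Field F] [CommRing B] [IsDomain B] [Algebra F B] [Group G]
    [AddCommGroup V] [Module F V] [FiniteDimensional F V]
    (ρ : G →* (B ≃ₐ[F] B)) (σ : Representation F G V)
    (hfrac : ∀ a b : B, b ≠ 0 → (∀ g : G, ρ g a * b = ρ g b * a) →
      ∃ c : B, (∀ g : G, ρ g c = c) ∧ a = c * b)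
    (hreg : ∀ b : B, b ≠ 0 → (∀ g : G, ∃ c : F, ρ g b = c • b) → IsUnit b) :
    Function.Injective (multMap ρ σ) := by
  classical
  have hE : IsField (fixedSubring ρ) := by
    refine ⟨⟨0, 1, fun h => zero_ne_one (congrArg Subtype.val h)⟩, mul_comm, ?_⟩
    intro a ha
    have ha' : (a : B) ≠ 0 := fun h => ha (Subtype.ext h)
    have hu : IsUnit (a : B) := hreg a ha' fun g => ⟨1, by rw [a.2 g, one_smul]⟩
    obtain ⟨b, hb⟩ := hu.exists_right_inv
    have hbE : ∀ g : G, ρ g b = b := by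
      intro g
      have h1 : (a : B) * ρ g b = 1 := by
        have := congrArg (ρ g) hb
        rw [map_mul, map_one, a.2 g] at this
        exact this
      exact mul_left_cancel₀ ha' (h1.trans hb.symm)
    exact ⟨⟨b, hbE⟩, Subtype.ext hb⟩
  letI : Field (fixedSubring ρ) := hE.toField
  let bD := Module.Basis.ofVectorSpace (fixedSubring ρ) (periodSpace ρ σ)
  have hind : LinearIndependent B (fun i => ((bD i : B ⊗[F] V))) :=
    key_linearIndependent ρ σ hfrac _ bD.linearIndependent
  let bB := bD.baseChange B
  have hker : ∀ z, multMap ρ σ z = 0 → z = 0 := by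
    intro z hz
    rw [← bB.linearCombination_repr z] at hz ⊢
    rw [Finsupp.linearCombination_apply, Finsupp.sum, map_sum] at hz
    have hterm : ∀ i, multMap ρ σ ((bB.repr z) i • bB i) =
        ((bB.repr z) i) • ((bD i : B ⊗[F] V)) := by
      intro i
      have h1 : (bB.repr z) i • bB i = ((bB.repr z) i) ⊗ₜ[fixedSubring ρ] (bD i) := by
        rw [Module.Basis.baseChange_apply, TensorProduct.smul_tmul', smul_eq_mul, mul_one]
      rw [h1]
      rfl
    simp only [hterm] at hz
    have : bB.repr z = 0 := by
      refine linearIndependent_iff.mp hind (bB.repr z) ?_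
      rw [Finsupp.linearCombination_apply, Finsupp.sum]
      exact hz
    rw [this, map_zero]
  intro x y hxy
  have : x - y = 0 := hker _ (by rw [map_sub, hxy, sub_self])
  exact sub_eq_zero.mp this
end
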